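/- Let R_{ij} (i<j) be raising operators acting on compositions. For a partition λ of length ℓ, the Hall-Littlewood polynomial defined via raising operators, Q_λ = ∏_{1≤i<j≤ℓ} (1−R_{ij})(1−tR_{ij})^{-1} q_λ, expands as Q_λ ∈ q_λ + ∑_{μ ⊳ λ} ℚ(t)·q_μ, where the sum is over partitions μ of |λ| strictly dominating λ; consequently {Q_λ : λ partition} is a ℚ(t)-basis of ℚ(t)[q_1, q_2, …]. -/

import Mathlib

/- STATEMENT 9: Hall-Littlewood functions via raising operators.  In
Λ_t = ℚ(t)[q₁,q₂,…] (= MvPolynomial ℕ (ℚ(t)), with q_{n+1} = X n, q₀ = 1 and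
q_a = 0 for a < 0), define for an integer vector α of length ℓ
   Q_α = ∏_{1≤i<j≤ℓ} (1-R_{ij})(1-tR_{ij})⁻¹ q_α,
expanding each factor as 1 + (t-1)∑_{p≥1} t^{p-1} R_{ij}^p; the total expansion is
the (finitely supported) sum over exponent data p : pairs → ℕ of
∏ c(p_{ij}) · q_{α + ∑ p_{ij}(e_i - e_j)}, with c(0) = 1, c(p) = (t-1)t^{p-1}.
Then for every partition λ, Q_λ ∈ q_λ + ∑_{μ ⊳ λ} ℚ(t) q_μ (sum over partitions μ
of |λ| strictly dominating λ), and consequently {Q_λ} over all partitions is a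
ℚ(t)-basis of Λ_t. -/

noncomputable section

attribute [local instance] Classical.propDecidable

local notation "K" => RatFunc ℚ

noncomputable def tv : K := RatFunc.X

abbrev RQ : Type := MvPolynomial ℕ K

/-- q_a for a ∈ ℤ: q₀ = 1, q_a = 0 for a < 0, q_a = X (a-1) for a ≥ 1. -/
noncomputable def qz (a : ℤ) : RQ :=
  if a < 0 then 0 else if a = 0 then 1 else MvPolynomial.X (a.toNat - 1)

/-- the monomial q_β = q_{β_1} ⋯ q_{β_ℓ}. -/
noncomputable def qmono (ℓ : ℕ) (β : Fin ℓ → ℤ) : RQ := ∏ k, qz (β k)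

/-- coefficient of R^p in (1-R)(1-tR)⁻¹ = 1 + (t-1)∑_{p≥1} t^{p-1} R^p. -/
noncomputable def cR (p : ℕ) : K := if p = 0 then 1 else (tv - 1) * tv ^ (p - 1)

/-- Q_α = ∏_{i<j}(1-R_{ij})(1-tR_{ij})⁻¹ q_α, fully expanded. -/
noncomputable def Qv (ℓ : ℕ) (α : Fin ℓ → ℤ) : RQ :=
  ∑ᶠ p : Fin ℓ × Fin ℓ → ℕ,
    if ∀ ij : Fin ℓ × Fin ℓ, ¬ ij.1 < ij.2 → p ij = 0 then
      (∏ ij : Fin ℓ × Fin ℓ, cR (p ij)) •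
        qmono ℓ (fun k => α k + (∑ j, (p (k, j) : ℤ)) - ∑ i, (p (i, k) : ℤ))
    else 0

/-- a partition: antitone and eventually zero. -/
def IsPart (f : ℕ → ℕ) : Prop := Antitone f ∧ ∃ N, ∀ n, N ≤ n → f n = 0

/-- the length bound of an eventually-zero function. -/
noncomputable def plen (f : ℕ → ℕ) : ℕ := sInf {N | ∀ n, N ≤ n → f n = 0}

/-- Q_λ for a partition λ, using its length. -/
noncomputable def Qpart (f : ℕ → ℕ) : RQ := Qv (plen f) (fun k => (f (k : ℕ) : ℤ))

/-- the monomial q_λ for a partition λ. -/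
noncomputable def qmonoP (f : ℕ → ℕ) : RQ := ∏ᶠ i : ℕ, qz (f i)

---- auxiliary development

namespace HLaux
open MvPolynomial Finset

lemma qz_of_neg {a : ℤ} (h : a < 0) : qz a = 0 := if_pos h

lemma qz_zero : qz 0 = 1 := by simp [qz]

lemma qz_of_pos {a : ℤ} (h : 0 < a) : qz a = MvPolynomial.X (a.toNat - 1) := by
  simp [qz, h.not_gt, h.ne']

lemma plen_spec {f : ℕ → ℕ} (hf : IsPart f) : ∀ n, plen f ≤ n → f n = 0 :=
  Nat.sInf_mem (hf.2 : {N | ∀ n, N ≤ n → f n = 0}.Nonempty)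

lemma pos_of_lt_plen {f : ℕ → ℕ} (hf : IsPart f) {i : ℕ} (h : i < plen f) : 1 ≤ f i := by
  by_contra hi
  have hfi : f i = 0 := by omega
  have : plen f ≤ i := Nat.sInf_le (fun n hn => Nat.le_antisymm (hfi ▸ hf.1 hn) (Nat.zero_le _))
  omega

lemma lt_plen_of_pos {f : ℕ → ℕ} (hf : IsPart f) {i : ℕ} (h : 1 ≤ f i) : i < plen f := by
  by_contra hi
  have := plen_spec hf i (by omega)
  omega

lemma qmonoP_eq_prod (f : ℕ → ℕ) {m : ℕ} (hm : ∀ n, m ≤ n → f n = 0) :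
    qmonoP f = ∏ i ∈ Finset.range m, qz (f i) := by
  apply finprod_eq_prod_of_mulSupport_subset
  intro i hi
  simp only [Function.mem_mulSupport] at hi
  simp only [Finset.coe_range, Set.mem_Iio]
  by_contra h
  exact hi (by rw [hm i (by omega)]; exact qz_zero)

lemma prod_monomial {ι : Type*} (s : Finset ι) (d : ι → (ℕ →₀ ℕ)) :
    ∏ i ∈ s, (monomial (d i) (1 : K)) = monomial (∑ i ∈ s, d i) 1 := by
  classical
  induction s using Finset.induction with
  | empty => simp
  | insert a s hx ih => simp [Finset.prod_insert hx, Finset.sum_insert hx, ih,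
      MvPolynomial.monomial_mul]

noncomputable def Ef (f : ℕ → ℕ) : ℕ →₀ ℕ :=
  ∑ i ∈ Finset.range (plen f), Finsupp.single (f i - 1) 1

lemma qmonoP_eq_monomial {f : ℕ → ℕ} (hf : IsPart f) :
    qmonoP f = monomial (Ef f) (1 : K) := by
  rw [qmonoP_eq_prod f (plen_spec hf), Ef, ← prod_monomial]
  apply Finset.prod_congr rfl
  intro i hi
  rw [Finset.mem_range] at hi
  have h1 : 1 ≤ f i := pos_of_lt_plen hf hi
  rw [qz_of_pos (by exact_mod_cast h1), X]
  simp

lemma Ef_apply {f : ℕ → ℕ} (hf : IsPart f) (n : ℕ) :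
    Ef f n = ((Finset.range (plen f)).filter (fun i => f i = n + 1)).card := by
  rw [Ef]
  rw [Finsupp.finset_sum_apply]
  rw [Finset.card_filter]
  apply Finset.sum_congr rfl
  intro i hi
  rw [Finset.mem_range] at hi
  have h1 : 1 ≤ f i := pos_of_lt_plen hf hi
  rw [Finsupp.single_apply]
  congr 1
  simp only [eq_iff_iff]
  omega


lemma dc_eq_range {s : Finset ℕ} (h : ∀ j ∈ s, ∀ j' ≤ j, j' ∈ s) :
    s = Finset.range s.card := by
  ext j
  simp only [Finset.mem_range]
  constructor
  · intro hj
    have : Finset.range (j+1) ⊆ s := by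
      intro j' hj'
      exact h j hj j' (by simpa using Nat.lt_succ_iff.mp (Finset.mem_range.mp hj'))
    have := Finset.card_le_card this
    simpa using this
  · intro hj
    by_contra hjs
    have hsub : s ⊆ Finset.range j := by
      intro j' hj'
      rw [Finset.mem_range]
      by_contra hge
      exact hjs (h j' hj' j (by omega))
    have := Finset.card_le_card hsub
    simp at this
    omega

/-- the filter of indices with part ≥ m+1 as an initial range -/
lemma filter_ge_dc {f : ℕ → ℕ} (hf : IsPart f) (m : ℕ) :
    (Finset.range (plen f)).filter (fun j => m + 1 ≤ f j)
      = Finset.range (((Finset.range (plen f)).filter (fun j => m + 1 ≤ f j)).card) := by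
  apply dc_eq_range
  intro j hj j' hj'
  simp only [Finset.mem_filter, Finset.mem_range] at hj ⊢
  exact ⟨by omega, le_trans hj.2 (hf.1 hj')⟩

lemma card_filter_ge {f : ℕ → ℕ} (hf : IsPart f) (m : ℕ) :
    ((Finset.range (plen f)).filter (fun j => m + 1 ≤ f j)).card
      = ∑ n ∈ (Ef f).support.filter (fun n => m ≤ n), Ef f n := by
  rw [Finset.card_eq_sum_card_fiberwise
    (f := fun j => f j - 1) (t := (Ef f).support.filter (fun n => m ≤ n)) ?_]
  · apply Finset.sum_congr rfl
    intro n hn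
    simp only [Finset.mem_filter] at hn
    rw [Ef_apply hf n]
    congr 1
    ext j
    simp only [Finset.mem_filter, Finset.mem_range]
    constructor
    · rintro ⟨⟨hjr, hge⟩, hfj⟩
      exact ⟨hjr, by omega⟩
    · rintro ⟨hjr, hfj⟩
      have := pos_of_lt_plen hf hjr
      exact ⟨⟨hjr, by omega⟩, by omega⟩
  · intro j hj
    simp only [Finset.mem_coe, Finset.mem_filter, Finset.mem_range] at hj
    have h1 : 1 ≤ f j := by omega
    simp only [Finset.mem_coe, Finset.mem_filter, Finsupp.mem_support_iff]
    constructor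
    · rw [Ef_apply hf]
      have : j ∈ (Finset.range (plen f)).filter (fun i => f i = (f j - 1) + 1) := by
        simp only [Finset.mem_filter, Finset.mem_range]
        exact ⟨hj.1, by omega⟩
      have hc := Finset.card_pos.mpr ⟨j, this⟩
      omega
    · omega

lemma ge_iff_mem_filter {f : ℕ → ℕ} (hf : IsPart f) (m j : ℕ) :
    m + 1 ≤ f j ↔ j ∈ (Finset.range (plen f)).filter (fun j => m + 1 ≤ f j) := by
  simp only [Finset.mem_filter, Finset.mem_range]
  exact ⟨fun h => ⟨lt_plen_of_pos hf (by omega), h⟩, fun h => h.2⟩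

lemma Ef_inj {f g : ℕ → ℕ} (hf : IsPart f) (hg : IsPart g) (h : Ef f = Ef g) : f = g := by
  have key : ∀ m j, m + 1 ≤ f j ↔ m + 1 ≤ g j := by
    intro m j
    rw [ge_iff_mem_filter hf m j, ge_iff_mem_filter hg m j,
      filter_ge_dc hf m, filter_ge_dc hg m, card_filter_ge hf m, card_filter_ge hg m, h]
  funext j
  have h1 := key (f j - 1) j
  have h2 := key (g j - 1) j
  omega


def UT (ℓ : ℕ) (p : Fin ℓ × Fin ℓ → ℕ) : Prop :=
  ∀ ij : Fin ℓ × Fin ℓ, ¬ ij.1 < ij.2 → p ij = 0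

noncomputable def betaF (ℓ : ℕ) (α : Fin ℓ → ℤ) (p : Fin ℓ × Fin ℓ → ℕ) : Fin ℓ → ℤ :=
  fun k => α k + (∑ j, (p (k, j) : ℤ)) - ∑ i, (p (i, k) : ℤ)

noncomputable def termF (ℓ : ℕ) (α : Fin ℓ → ℤ) (p : Fin ℓ × Fin ℓ → ℕ) : RQ :=
  if UT ℓ p then (∏ ij, cR (p ij)) • qmono ℓ (betaF ℓ α p) else 0

lemma Qv_eq (ℓ : ℕ) (α : Fin ℓ → ℤ) : Qv ℓ α = ∑ᶠ p, termF ℓ α p := by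
  unfold Qv termF UT betaF
  exact finsum_congr fun p => by split_ifs <;> rfl

lemma prefix_sum {ℓ : ℕ} (α : Fin ℓ → ℤ) (p : Fin ℓ × Fin ℓ → ℕ) (hp : UT ℓ p) (m : ℕ) :
    ∑ k ∈ Finset.univ.filter (fun k : Fin ℓ => k.val < m), (betaF ℓ α p k - α k)
      = ∑ ij ∈ Finset.univ.filter
          (fun ij : Fin ℓ × Fin ℓ => ij.1.val < m ∧ ¬ ij.2.val < m), (p ij : ℤ) := by
  have h1 : ∑ ij : Fin ℓ × Fin ℓ, (if ij.1.val < m then (p ij : ℤ) else 0)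
      = ∑ x : Fin ℓ, (if x.val < m then (∑ j, (p (x, j) : ℤ)) else 0) := by
    rw [Fintype.sum_prod_type]
    exact Finset.sum_congr rfl fun x _ => by by_cases h : x.val < m <;> simp [h]
  have h2 : ∑ ij : Fin ℓ × Fin ℓ, (if ij.2.val < m then (p ij : ℤ) else 0)
      = ∑ y : Fin ℓ, (if y.val < m then (∑ i, (p (i, y) : ℤ)) else 0) := by
    rw [Fintype.sum_prod_type_right]
    exact Finset.sum_congr rfl fun y _ => by by_cases h : y.val < m <;> simp [h]
  have lhs : ∑ k ∈ Finset.univ.filter (fun k : Fin ℓ => k.val < m), (betaF ℓ α p k - α k)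
      = ∑ ij : Fin ℓ × Fin ℓ,
          ((if ij.1.val < m then (p ij : ℤ) else 0) - (if ij.2.val < m then (p ij : ℤ) else 0)) := by
    calc ∑ k ∈ Finset.univ.filter (fun k : Fin ℓ => k.val < m), (betaF ℓ α p k - α k)
        = ∑ x : Fin ℓ, ((if x.val < m then (∑ j, (p (x, j) : ℤ)) else 0)
            - (if x.val < m then (∑ i, (p (i, x) : ℤ)) else 0)) := by
          rw [Finset.sum_filter]
          exact Finset.sum_congr rfl fun x _ => by
            by_cases h : x.val < m <;> simp [h, betaF] <;> ring
      _ = (∑ x : Fin ℓ, (if x.val < m then (∑ j, (p (x, j) : ℤ)) else 0))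
            - ∑ x : Fin ℓ, (if x.val < m then (∑ i, (p (i, x) : ℤ)) else 0) :=
          Finset.sum_sub_distrib _ _
      _ = (∑ ij : Fin ℓ × Fin ℓ, (if ij.1.val < m then (p ij : ℤ) else 0))
            - ∑ ij : Fin ℓ × Fin ℓ, (if ij.2.val < m then (p ij : ℤ) else 0) := by
          rw [h1, h2]
      _ = _ := (Finset.sum_sub_distrib _ _).symm
  rw [lhs, Finset.sum_filter]
  apply Finset.sum_congr rfl
  intro ij _
  by_cases h12 : ij.1 < ij.2
  · rw [Fin.lt_def] at h12
    by_cases hh1 : ij.1.val < m <;> by_cases hh2 : ij.2.val < m <;> simp [hh1, hh2] <;> omega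
  · have hz := hp ij h12
    rw [Fin.lt_def] at h12
    by_cases hh1 : ij.1.val < m <;> by_cases hh2 : ij.2.val < m <;> simp [hh1, hh2, hz] <;> omega


lemma total_eq {ℓ : ℕ} {α : Fin ℓ → ℤ} {p : Fin ℓ × Fin ℓ → ℕ} (hp : UT ℓ p) :
    ∑ k, betaF ℓ α p k = ∑ k, α k := by
  have h := prefix_sum α p hp ℓ
  have h1 : Finset.univ.filter (fun k : Fin ℓ => k.val < ℓ) = Finset.univ := by
    apply Finset.filter_true_of_mem; intro k _; exact k.isLt
  have h2 : Finset.univ.filter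
      (fun ij : Fin ℓ × Fin ℓ => ij.1.val < ℓ ∧ ¬ ij.2.val < ℓ) = ∅ := by
    apply Finset.filter_false_of_mem; intro ij _ hij; exact hij.2 ij.2.isLt
  rw [h1, h2] at h
  simp only [Finset.sum_empty, Finset.sum_sub_distrib] at h
  omega

lemma prefix_le {ℓ : ℕ} {α : Fin ℓ → ℤ} {p : Fin ℓ × Fin ℓ → ℕ} (hp : UT ℓ p) (m : ℕ) :
    ∑ k ∈ Finset.univ.filter (fun k : Fin ℓ => k.val < m), α k
      ≤ ∑ k ∈ Finset.univ.filter (fun k : Fin ℓ => k.val < m), betaF ℓ α p k := by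
  have h := prefix_sum α p hp m
  have hnn : 0 ≤ ∑ ij ∈ Finset.univ.filter
      (fun ij : Fin ℓ × Fin ℓ => ij.1.val < m ∧ ¬ ij.2.val < m), (p ij : ℤ) :=
    Finset.sum_nonneg fun ij _ => Int.natCast_nonneg _
  rw [Finset.sum_sub_distrib] at h
  omega

lemma p_eq_zero {ℓ : ℕ} {α : Fin ℓ → ℤ} {p : Fin ℓ × Fin ℓ → ℕ} (hp : UT ℓ p)
    (h : ∀ m, ∑ k ∈ Finset.univ.filter (fun k : Fin ℓ => k.val < m), betaF ℓ α p k
        = ∑ k ∈ Finset.univ.filter (fun k : Fin ℓ => k.val < m), α k) :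
    p = 0 := by
  funext ij
  by_cases hlt : ij.1 < ij.2
  · have hps := prefix_sum α p hp (ij.1.val + 1)
    rw [Finset.sum_sub_distrib, h (ij.1.val + 1), sub_self] at hps
    have := (Finset.sum_eq_zero_iff_of_nonneg
      (fun ij _ => Int.natCast_nonneg (p ij))).mp hps.symm ij ?_
    · exact_mod_cast this
    · simp only [Finset.mem_filter, Finset.mem_univ, true_and]
      rw [Fin.lt_def] at hlt
      omega
  · exact hp ij hlt

lemma p_bound {ℓ : ℕ} {α : Fin ℓ → ℤ} {p : Fin ℓ × Fin ℓ → ℕ} (hp : UT ℓ p)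
    (hα : ∀ k, 0 ≤ α k) (hβ : ∀ k, 0 ≤ betaF ℓ α p k) (ij : Fin ℓ × Fin ℓ) :
    (p ij : ℤ) ≤ ∑ k, α k := by
  by_cases hlt : ij.1 < ij.2
  · have h := prefix_sum α p hp ij.2.val
    have hsingle : (p ij : ℤ) ≤ ∑ ij' ∈ Finset.univ.filter
        (fun ij' : Fin ℓ × Fin ℓ => ij'.1.val < ij.2.val ∧ ¬ ij'.2.val < ij.2.val), (p ij' : ℤ) := by
      apply Finset.single_le_sum (f := fun ij' => (p ij' : ℤ))
        (fun i _ => Int.natCast_nonneg _)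
      simp only [Finset.mem_filter, Finset.mem_univ, true_and]
      rw [Fin.lt_def] at hlt
      omega
    rw [Finset.sum_sub_distrib] at h
    have hsub : ∑ k ∈ Finset.univ.filter (fun k : Fin ℓ => k.val < ij.2.val), betaF ℓ α p k
        ≤ ∑ k, betaF ℓ α p k :=
      Finset.sum_le_sum_of_subset_of_nonneg (Finset.filter_subset _ _) (fun k _ _ => hβ k)
    have hα0 : 0 ≤ ∑ k ∈ Finset.univ.filter (fun k : Fin ℓ => k.val < ij.2.val), α k :=
      Finset.sum_nonneg fun k _ => hα k
    have ht := total_eq (α := α) hp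
    linarith
  · have := hp ij hlt
    simp only [this, Nat.cast_zero]
    exact Finset.sum_nonneg fun k _ => hα k


lemma exists_partner {ℓ : ℕ} (β : Fin ℓ → ℤ) (hβ : ∀ k, 0 ≤ β k) :
    ∃ g : ℕ → ℕ, IsPart g ∧ (∀ i, ℓ ≤ i → g i = 0) ∧
      qmonoP g = qmono ℓ β ∧
      (∑ i ∈ Finset.range ℓ, (g i : ℤ)) = (∑ k, β k) ∧
      (∀ m, ∑ k ∈ Finset.univ.filter (fun k : Fin ℓ => k.val < m), β k
          ≤ ∑ i ∈ Finset.range m, (g i : ℤ)) := by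
  classical
  set σ₀ : Equiv.Perm (Fin ℓ) := Tuple.sort β with hσ₀
  set π : Equiv.Perm (Fin ℓ) := Fin.revPerm.trans σ₀ with hπ
  set g₀ : Fin ℓ → ℤ := fun i => β (π i) with hg₀
  have hg₀anti : Antitone g₀ := by
    intro i j hij
    exact Tuple.monotone_sort β (by simpa [Fin.rev_le_rev] using hij :
      (Fin.revPerm j : Fin ℓ) ≤ Fin.revPerm i)
  have hg₀nn : ∀ i, 0 ≤ g₀ i := fun i => hβ _
  set g : ℕ → ℕ := fun i => if h : i < ℓ then (g₀ ⟨i, h⟩).toNat else 0 with hg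
  have hcast : ∀ i (h : i < ℓ), (g i : ℤ) = g₀ ⟨i, h⟩ := by
    intro i h
    simp only [hg, dif_pos h]
    exact Int.toNat_of_nonneg (hg₀nn _)
  have hzero : ∀ i, ℓ ≤ i → g i = 0 := by
    intro i hi; simp only [hg, dif_neg (by omega : ¬ i < ℓ)]
  have hpart : IsPart g := by
    constructor
    · intro a b hab
      by_cases hb : b < ℓ
      · have ha : a < ℓ := by omega
        have := hg₀anti (show (⟨a, ha⟩ : Fin ℓ) ≤ ⟨b, hb⟩ from hab)
        have h1 := hcast a ha; have h2 := hcast b hb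
        omega
      · rw [hzero b (by omega)]; exact Nat.zero_le _
    · exact ⟨ℓ, hzero⟩
  have hvals : ∀ i : Fin ℓ, (g i.val : ℤ) = g₀ i := fun i => by
    rw [hcast i.val i.isLt]
  refine ⟨g, hpart, hzero, ?_, ?_, ?_⟩
  · -- qmonoP g = qmono ℓ β
    rw [qmonoP_eq_prod g hzero, qmono]
    rw [← Fin.prod_univ_eq_prod_range (fun i => qz (g i))]
    calc ∏ i : Fin ℓ, qz (g i.val) = ∏ i : Fin ℓ, qz (g₀ i) := by
          exact Finset.prod_congr rfl fun i _ => by rw [hvals i]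
      _ = ∏ i : Fin ℓ, qz (β i) := Equiv.prod_comp π (fun i => qz (β i))
  · -- total sum
    rw [← Fin.sum_univ_eq_sum_range (fun i => (g i : ℤ))]
    calc ∑ i : Fin ℓ, (g i.val : ℤ) = ∑ i : Fin ℓ, g₀ i :=
          Finset.sum_congr rfl fun i _ => hvals i
      _ = ∑ k, β k := Equiv.sum_comp π β
  · -- prefix sums
    intro m
    set w : Fin ℓ → ℤ := fun i => if i.val < m then 1 else 0 with hw
    have hmono : Monovary w g₀ := by
      intro i j hij
      have hji : j < i := by
        by_contra hc
        exact absurd (hg₀anti (le_of_not_gt hc)) (not_le.mpr hij)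
      simp only [hw]
      by_cases h1 : i.val < m
      · simp [h1, show j.val < m by omega]
      · by_cases h2 : j.val < m <;> simp [h1, h2]
    have hre := hmono.sum_smul_comp_perm_le_sum_smul (σ := π.symm)
    have hl : ∑ i, w i • g₀ (π.symm i) = ∑ k ∈ Finset.univ.filter
        (fun k : Fin ℓ => k.val < m), β k := by
      rw [Finset.sum_filter]
      apply Finset.sum_congr rfl
      intro i _
      have : g₀ (π.symm i) = β i := by simp [hg₀]
      rw [this, hw]
      by_cases h : i.val < m <;> simp [h]
    have hr : ∑ i, w i • g₀ i ≤ ∑ i ∈ Finset.range m, (g i : ℤ) := by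
      have e1 : ∑ i, w i • g₀ i = ∑ i ∈ Finset.range ℓ, (if i < m then (g i : ℤ) else 0) := by
        rw [← Fin.sum_univ_eq_sum_range (fun i => if i < m then (g i : ℤ) else 0)]
        apply Finset.sum_congr rfl
        intro i _
        rw [hw, ← hvals i]
        by_cases h : i.val < m <;> simp [h]
      rw [e1]
      have e2 : ∑ i ∈ Finset.range ℓ, (if i < m then (g i : ℤ) else 0)
          = ∑ i ∈ Finset.range (min m ℓ), (g i : ℤ) := by
        rw [← Finset.sum_filter]
        apply Finset.sum_congr _ (fun _ _ => rfl)
        ext i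
        simp only [Finset.mem_filter, Finset.mem_range]
        omega
      rw [e2]
      apply Finset.sum_le_sum_of_subset_of_nonneg
      · intro i hi; simp only [Finset.mem_range] at hi ⊢; omega
      · intro i _ _; exact Int.natCast_nonneg _
    exact le_trans (le_of_eq hl.symm) (le_trans hre hr)


lemma finsum_nat_eq {f : ℕ → ℕ} {m : ℕ} (hm : ∀ n, m ≤ n → f n = 0) :
    ∑ᶠ i, f i = ∑ i ∈ Finset.range m, f i := by
  apply finsum_eq_sum_of_support_subset
  intro i hi
  simp only [Function.mem_support] at hi
  simp only [Finset.coe_range, Set.mem_Iio]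
  by_contra h
  exact hi (hm i (by omega))

lemma sum_range_le_total {f : ℕ → ℕ} (hf : IsPart f) (k : ℕ) :
    ∑ i ∈ Finset.range k, f i ≤ ∑ᶠ i, f i := by
  rw [finsum_nat_eq (m := max k (plen f)) (fun n hn => plen_spec hf n (by omega))]
  exact Finset.sum_le_sum_of_subset (by
    intro i hi; simp only [Finset.mem_range] at hi ⊢; omega)

lemma part_zero_of_total_le {f : ℕ → ℕ} (hf : IsPart f) {i : ℕ} (hi : ∑ᶠ j, f j ≤ i) :
    f i = 0 := by
  by_contra h
  have h1 : 1 ≤ f i := by omega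
  have hall : ∀ j ∈ Finset.range (i + 1), 1 ≤ f j := fun j hj =>
    le_trans h1 (hf.1 (by simpa using Nat.lt_succ_iff.mp (Finset.mem_range.mp hj)))
  have : i + 1 ≤ ∑ j ∈ Finset.range (i + 1), f j := by
    calc i + 1 = ∑ _j ∈ Finset.range (i + 1), 1 := by simp
    _ ≤ _ := Finset.sum_le_sum hall
  have := sum_range_le_total hf (i + 1)
  omega

lemma sum_range_eq_total {f : ℕ → ℕ} (hf : IsPart f) {k : ℕ} (hk : ∑ᶠ i, f i ≤ k) :
    ∑ i ∈ Finset.range k, f i = ∑ᶠ i, f i := by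
  rw [finsum_nat_eq (m := k) (fun n hn => part_zero_of_total_le hf (le_trans hk hn))]

/-- finiteness of the set of partitions with given total (or any subset thereof) -/
lemma parts_finite (n : ℕ) :
    {g : ℕ → ℕ | IsPart g ∧ (∑ᶠ i, g i) = n}.Finite := by
  classical
  have himg : Set.Finite ((fun (g : ℕ → ℕ) (i : Fin n) => g i) ''
      {g : ℕ → ℕ | IsPart g ∧ (∑ᶠ i, g i) = n}) := by
    apply Set.Finite.subset (Set.Finite.pi (fun _ : Fin n => Set.finite_Iic n))
    rintro h ⟨g, hg, rfl⟩
    simp only [Set.mem_pi, Set.mem_univ, Set.mem_Iic, forall_true_left]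
    intro i
    have h1 : g i ≤ ∑ j ∈ Finset.range (i + 1), g j :=
      Finset.single_le_sum (fun j _ => Nat.zero_le _) (Finset.self_mem_range_succ i)
    have h2 := sum_range_le_total hg.1 (i + 1)
    have h3 := hg.2
    omega
  apply Set.Finite.of_finite_image himg
  intro g1 hg1 g2 hg2 h
  funext i
  by_cases hi : i < n
  · exact congrFun h ⟨i, hi⟩
  · rw [part_zero_of_total_le hg1.1 (hg1.2 ▸ (by omega : n ≤ i)),
      part_zero_of_total_le hg2.1 (hg2.2 ▸ (by omega : n ≤ i))]

lemma qmono_eq_zero {ℓ : ℕ} {β : Fin ℓ → ℤ} {k : Fin ℓ} (hk : β k < 0) :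
    qmono ℓ β = 0 :=
  Finset.prod_eq_zero (Finset.mem_univ k) (qz_of_neg hk)

lemma coeff_qmonoP {h f : ℕ → ℕ} (hh : IsPart h) (hf : IsPart f) :
    MvPolynomial.coeff (Ef f) (qmonoP h) = if h = f then 1 else 0 := by
  rw [qmonoP_eq_monomial hh, MvPolynomial.coeff_monomial]
  by_cases he : Ef h = Ef f
  · rw [if_pos he, if_pos (Ef_inj hh hf he)]
  · rw [if_neg he, if_neg (fun hc => he (by rw [hc]))]

lemma qmonoP_injOn {g1 g2 : ℕ → ℕ} (h1 : IsPart g1) (h2 : IsPart g2)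
    (h : qmonoP g1 = qmonoP g2) : g1 = g2 := by
  have := coeff_qmonoP h1 h1
  rw [if_pos rfl, h, coeff_qmonoP h2 h1] at this
  by_cases hc : g2 = g1
  · rw [hc]
  · rw [if_neg hc] at this
    exact absurd this.symm one_ne_zero


lemma sum_range_eq_filter {f : ℕ → ℕ} (hf : IsPart f) (m : ℕ) :
    ∑ i ∈ Finset.range m, (f i : ℤ)
      = ∑ k ∈ Finset.univ.filter (fun k : Fin (plen f) => k.val < m), (f k.val : ℤ) := by
  have e2 : (Finset.range (plen f)).filter (· < m) = Finset.range (min m (plen f)) := by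
    ext i
    simp only [Finset.mem_filter, Finset.mem_range]
    omega
  rw [Finset.sum_filter, Fin.sum_univ_eq_sum_range (fun i => if i < m then (f i : ℤ) else 0),
    ← Finset.sum_filter, e2]
  apply (Finset.sum_subset ?_ ?_).symm
  · intro i hi
    simp only [Finset.mem_range] at hi ⊢
    omega
  · intro i hi hni
    simp only [Finset.mem_range] at hi hni
    rw [plen_spec hf i (by omega), Nat.cast_zero]

def SD (f : ℕ → ℕ) : Set (ℕ → ℕ) :=
  {g | IsPart g ∧ (∑ᶠ i, g i) = (∑ᶠ i, f i) ∧
    (∀ k, ∑ i ∈ Finset.range k, f i ≤ ∑ i ∈ Finset.range k, g i) ∧ g ≠ f}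

lemma SD_finite (f : ℕ → ℕ) : (SD f).Finite :=
  Set.Finite.subset (parts_finite (∑ᶠ i, f i)) (fun g hg => ⟨hg.1, hg.2.1⟩)

lemma expand (f : ℕ → ℕ) (hf : IsPart f) :
    ∃ c : (ℕ → ℕ) → K,
      Qpart f = qmonoP f + ∑ g ∈ (SD_finite f).toFinset, c g • qmonoP g := by
  classical
  set n := ∑ᶠ i, f i with hn
  set ℓ := plen f with hℓ
  set α : Fin ℓ → ℤ := fun k => (f k.val : ℤ) with hα
  have hα0 : ∀ k, 0 ≤ α k := fun k => Int.natCast_nonneg _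
  have hrange : ∑ i ∈ Finset.range ℓ, f i = n := (finsum_nat_eq (plen_spec hf)).symm
  have htotα : ∑ k, α k = (n : ℤ) := by
    rw [hα, Fin.sum_univ_eq_sum_range (fun i => (f i : ℤ)) ℓ, ← Nat.cast_sum, hrange]
  set PF : Finset (Fin ℓ × Fin ℓ → ℕ) := Fintype.piFinset (fun _ => Finset.range (n+1)) with hPF
  have hsupp : Function.support (termF ℓ α) ⊆ ↑PF := by
    intro p hp
    simp only [Function.mem_support] at hp
    rw [termF] at hp
    by_cases hUT : UT ℓ p
    · rw [if_pos hUT] at hp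
      have hq : qmono ℓ (betaF ℓ α p) ≠ 0 := fun h => hp (by rw [h, smul_zero])
      have hβ0 : ∀ k, 0 ≤ betaF ℓ α p k := by
        intro k
        by_contra hk
        exact hq (qmono_eq_zero (k := k) (by omega))
      have hb := p_bound hUT hα0 hβ0
      simp only [hPF, Finset.mem_coe, Fintype.mem_piFinset, Finset.mem_range]
      intro ij
      have := hb ij
      rw [htotα] at this
      omega
    · rw [if_neg hUT] at hp
      exact absurd rfl hp
  have hQ : Qpart f = ∑ p ∈ PF, termF ℓ α p := by
    rw [Qpart, ← hℓ, show (fun k : Fin ℓ => ((f k : ℕ) : ℤ)) = α from rfl, Qv_eq]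
    exact finsum_eq_sum_of_support_subset _ hsupp
  have h0PF : (0 : Fin ℓ × Fin ℓ → ℕ) ∈ PF := by
    simp [hPF, Fintype.mem_piFinset]
  have hterm0 : termF ℓ α 0 = qmonoP f := by
    have hUT0 : UT ℓ 0 := fun ij _ => rfl
    rw [termF, if_pos hUT0]
    rw [Finset.prod_congr rfl (fun ij _ => by simp [cR] : ∀ ij ∈ Finset.univ,
      cR ((0 : Fin ℓ × Fin ℓ → ℕ) ij) = 1), Finset.prod_const_one, one_smul]
    have hβ : betaF ℓ α 0 = α := by funext k; simp [betaF]
    rw [hβ, qmono, qmonoP_eq_prod f (plen_spec hf),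
      ← Fin.prod_univ_eq_prod_range (fun i => qz (f i))]
  have hrest : ∑ p ∈ PF.erase 0, termF ℓ α p
      ∈ Submodule.span K (qmonoP '' SD f) := by
    apply Submodule.sum_mem
    intro p hpmem
    have hpne : p ≠ 0 := (Finset.mem_erase.mp hpmem).1
    rw [termF]
    by_cases hUT : UT ℓ p
    swap
    · rw [if_neg hUT]; exact Submodule.zero_mem _
    rw [if_pos hUT]
    by_cases hβ0 : ∀ k, 0 ≤ betaF ℓ α p k
    swap
    · push_neg at hβ0
      obtain ⟨k, hk⟩ := hβ0
      rw [qmono_eq_zero hk, smul_zero]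
      exact Submodule.zero_mem _
    obtain ⟨g, hgpart, hgzero, hgmono, hgtot, hgpre⟩ := exists_partner (betaF ℓ α p) hβ0
    have hgtots : (∑ᶠ i, g i) = n := by
      have h1 : ∑ᶠ i, g i = ∑ i ∈ Finset.range ℓ, g i := finsum_nat_eq hgzero
      have h2 : ((∑ i ∈ Finset.range ℓ, g i : ℕ) : ℤ) = (n : ℤ) := by
        rw [Nat.cast_sum, hgtot, total_eq hUT, htotα]
      rw [h1]
      exact_mod_cast h2
    have hdom : ∀ k, ∑ i ∈ Finset.range k, f i ≤ ∑ i ∈ Finset.range k, g i := by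
      intro m
      have h1 : (∑ i ∈ Finset.range m, (f i : ℤ)) ≤ ∑ i ∈ Finset.range m, (g i : ℤ) := by
        calc ∑ i ∈ Finset.range m, (f i : ℤ)
            = ∑ k ∈ Finset.univ.filter (fun k : Fin ℓ => k.val < m), α k :=
              sum_range_eq_filter hf m
          _ ≤ ∑ k ∈ Finset.univ.filter (fun k : Fin ℓ => k.val < m), betaF ℓ α p k :=
              prefix_le hUT m
          _ ≤ _ := hgpre m
      rw [← Nat.cast_sum, ← Nat.cast_sum] at h1
      exact_mod_cast h1
    have hne : g ≠ f := by
      intro hgf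
      apply hpne
      apply p_eq_zero hUT
      intro m
      have h1 : (∑ i ∈ Finset.range m, (f i : ℤ))
          = ∑ k ∈ Finset.univ.filter (fun k : Fin ℓ => k.val < m), α k :=
        sum_range_eq_filter hf m
      have h2 := prefix_le (α := α) hUT m
      have h3 := hgpre m
      rw [hgf] at h3
      exact le_antisymm (le_trans h3 (le_of_eq h1)) h2
    rw [hgmono.symm]
    exact Submodule.smul_mem _ _
      (Submodule.subset_span ⟨g, ⟨hgpart, hgtots, hdom, hne⟩, rfl⟩)
  have hsplit : Qpart f = qmonoP f + ∑ p ∈ PF.erase 0, termF ℓ α p := by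
    rw [hQ, ← Finset.add_sum_erase PF _ h0PF, hterm0]
  -- repackage the span membership as a finset sum
  have himg : qmonoP '' SD f = ↑((SD_finite f).toFinset.image qmonoP) := by
    simp [Set.Finite.coe_toFinset]
  rw [himg] at hrest
  obtain ⟨ff, -, hff⟩ := Submodule.mem_span_finset.mp hrest
  have hinj : ∀ x ∈ (SD_finite f).toFinset, ∀ y ∈ (SD_finite f).toFinset,
      qmonoP x = qmonoP y → x = y := by
    intro x hx y hy hxy
    rw [Set.Finite.mem_toFinset] at hx hy
    exact qmonoP_injOn hx.1 hy.1 hxy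
  refine ⟨fun g => ff (qmonoP g), ?_⟩
  rw [hsplit]
  congr 1
  rw [← hff, Finset.sum_image hinj]


def Msr (f : ℕ → ℕ) : ℕ := ∑ k ∈ Finset.range ((∑ᶠ i, f i) + 1), ∑ i ∈ Finset.range k, f i

lemma Msr_le {f : ℕ → ℕ} (hf : IsPart f) : Msr f ≤ ((∑ᶠ i, f i) + 1) * (∑ᶠ i, f i) := by
  calc Msr f ≤ ∑ _k ∈ Finset.range ((∑ᶠ i, f i) + 1), (∑ᶠ i, f i) :=
        Finset.sum_le_sum (fun k _ => sum_range_le_total hf k)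
    _ = ((∑ᶠ i, f i) + 1) * (∑ᶠ i, f i) := by
        rw [Finset.sum_const, Finset.card_range, smul_eq_mul]

lemma Msr_lt {f g : ℕ → ℕ} (hf : IsPart f) (hg : g ∈ SD f) : Msr f < Msr g := by
  obtain ⟨hgp, htot, hdom, hne⟩ := hg
  rw [Msr, Msr, htot]
  apply Finset.sum_lt_sum (fun k _ => hdom k)
  by_contra hc
  push_neg at hc
  apply hne
  have heq : ∀ k ∈ Finset.range ((∑ᶠ i, f i) + 1),
      ∑ i ∈ Finset.range k, f i = ∑ i ∈ Finset.range k, g i :=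
    fun k hk => le_antisymm (hdom k) (hc k hk)
  funext i
  by_cases hi : i < ∑ᶠ j, f j
  · have e1 := heq i (by simp only [Finset.mem_range]; omega)
    have e2 := heq (i + 1) (by simp only [Finset.mem_range]; omega)
    rw [Finset.sum_range_succ, Finset.sum_range_succ] at e2
    omega
  · rw [part_zero_of_total_le hgp (htot ▸ (by omega : ∑ᶠ j, f j ≤ i)),
      part_zero_of_total_le hf (by omega : ∑ᶠ j, f j ≤ i)]

def Npart (d : ℕ →₀ ℕ) (m : ℕ) : ℕ := ∑ n ∈ d.support.filter (fun n => m ≤ n), d n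

lemma Npart_anti (d : ℕ →₀ ℕ) : Antitone (Npart d) := by
  intro m m' h
  apply Finset.sum_le_sum_of_subset
  intro n hn
  simp only [Finset.mem_filter] at hn ⊢
  exact ⟨hn.1, by omega⟩

noncomputable def partFromD (d : ℕ →₀ ℕ) : ℕ → ℕ :=
  fun j => ((Finset.range ((d.support.sup id) + 1)).filter (fun m => j < Npart d m)).card

lemma Npart_zero {d : ℕ →₀ ℕ} {m : ℕ} (hm : d.support.sup id < m) : Npart d m = 0 := by
  rw [Npart]
  apply Finset.sum_eq_zero
  intro n hn
  simp only [Finset.mem_filter, Finsupp.mem_support_iff] at hn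
  have : n ≤ d.support.sup id := Finset.le_sup (f := id) (by simpa using hn.1)
  omega

lemma partFromD_char (d : ℕ →₀ ℕ) (j m : ℕ) :
    m + 1 ≤ partFromD d j ↔ j < Npart d m := by
  set B := d.support.sup id + 1 with hB
  set s := (Finset.range B).filter (fun m => j < Npart d m) with hs
  have hdc : ∀ a ∈ s, ∀ a' ≤ a, a' ∈ s := by
    intro a ha a' ha'
    simp only [hs, Finset.mem_filter, Finset.mem_range] at ha ⊢
    exact ⟨by omega, lt_of_lt_of_le ha.2 (Npart_anti d ha')⟩
  have hrange := dc_eq_range hdc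
  have hcard : partFromD d j = s.card := rfl
  constructor
  · intro h
    have hm : m ∈ s := by rw [hrange]; simp only [Finset.mem_range]; omega
    exact (Finset.mem_filter.mp hm).2
  · intro h
    have hmB : m < B := by
      by_contra hc
      rw [Npart_zero (by omega)] at h
      omega
    have hm : m ∈ s := Finset.mem_filter.mpr ⟨Finset.mem_range.mpr hmB, h⟩
    rw [hrange, Finset.mem_range] at hm
    omega

lemma partFromD_isPart (d : ℕ →₀ ℕ) : IsPart (partFromD d) := by
  constructor
  · intro a b hab
    apply Finset.card_le_card
    intro m hm
    simp only [Finset.mem_filter] at hm ⊢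
    exact ⟨hm.1, by omega⟩
  · refine ⟨Npart d 0, fun j hj => ?_⟩
    by_contra h
    have := (partFromD_char d j 0).mp (by omega)
    have := Npart_anti d (Nat.zero_le 0)
    omega

lemma Ef_partFromD (d : ℕ →₀ ℕ) : Ef (partFromD d) = d := by
  ext n
  rw [Ef_apply (partFromD_isPart d)]
  have hfil : ∀ m, (Finset.range (plen (partFromD d))).filter
      (fun j => m + 1 ≤ partFromD d j) = Finset.range (Npart d m) := by
    intro m
    ext j
    simp only [Finset.mem_filter, Finset.mem_range]
    constructor
    · intro hj
      exact (partFromD_char d j m).mp hj.2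
    · intro hj
      have h2 := (partFromD_char d j m).mpr hj
      exact ⟨lt_plen_of_pos (partFromD_isPart d) (by omega), h2⟩
  have h1 : (Finset.range (plen (partFromD d))).filter (fun j => partFromD d j = n + 1)
      = Finset.range (Npart d n) \ Finset.range (Npart d (n + 1)) := by
    ext j
    simp only [Finset.mem_filter, Finset.mem_range, Finset.mem_sdiff]
    constructor
    · intro hj
      exact ⟨(partFromD_char d j n).mp (by omega),
        fun hc => by have := (partFromD_char d j (n + 1)).mpr hc; omega⟩
    · rintro ⟨hj1, hj2⟩
      have ha := (partFromD_char d j n).mp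
      have hb := (partFromD_char d j (n + 1)).mpr
      have h3 := (partFromD_char d j n).mpr hj1
      have h4 : ¬ (n + 2 ≤ partFromD d j) := fun hc =>
        hj2 ((partFromD_char d j (n + 1)).mp hc)
      exact ⟨lt_plen_of_pos (partFromD_isPart d) (by omega), by omega⟩
  rw [h1, Finset.card_sdiff_of_subset (by
    intro x hx
    simp only [Finset.mem_range] at hx ⊢
    exact lt_of_lt_of_le hx (Npart_anti d (by omega)))]
  rw [Finset.card_range, Finset.card_range]
  have htel : Npart d n = d n + Npart d (n + 1) := by
    simp only [Npart]
    rw [← Finset.sum_filter_add_sum_filter_not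
      (d.support.filter (fun k => n ≤ k)) (fun k => n + 1 ≤ k)]
    have e1 : (d.support.filter (fun k => n ≤ k)).filter (fun k => n + 1 ≤ k)
        = d.support.filter (fun k => n + 1 ≤ k) := by
      rw [Finset.filter_filter]
      apply Finset.filter_congr
      intro k _
      constructor
      · exact fun h => h.2
      · intro h; omega
    have e2 : (d.support.filter (fun k => n ≤ k)).filter (fun k => ¬ n + 1 ≤ k)
        = d.support.filter (fun k => k = n) := by
      rw [Finset.filter_filter]
      apply Finset.filter_congr
      intro k _
      constructor
      · intro h; omega
      · intro h; omega
    rw [e1, e2]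
    have e3 : ∑ k ∈ d.support.filter (fun k => k = n), d k = d n := by
      by_cases hn : n ∈ d.support
      · rw [show d.support.filter (fun k => k = n) = {n} by
          ext k; simp only [Finset.mem_filter, Finset.mem_singleton]
          constructor
          · exact fun h => h.2
          · rintro rfl; exact ⟨hn, rfl⟩]
        exact Finset.sum_singleton _ _
      · rw [show d.support.filter (fun k => k = n) = ∅ by
          ext k; simp only [Finset.mem_filter, Finset.notMem_empty, iff_false]
          rintro ⟨hk, rfl⟩; exact hn hk]
        simp only [Finset.sum_empty]
        exact (Finsupp.notMem_support_iff.mp hn).symm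
    rw [e3]
    omega
  omega


lemma qmonoP_mem_span :
    ∀ (dd : ℕ) (f : ℕ → ℕ), IsPart f →
      ((∑ᶠ i, f i) + 1) * (∑ᶠ i, f i) ≤ Msr f + dd →
      qmonoP f ∈ Submodule.span K
        (Set.range (fun p : {f : ℕ → ℕ // IsPart f} => Qpart p.1)) := by
  intro dd
  induction dd with
  | zero =>
    intro f hf hd
    obtain ⟨c, hc⟩ := expand f hf
    have hT : (SD_finite f).toFinset = ∅ := by
      rw [Finset.eq_empty_iff_forall_notMem]
      intro g hg
      rw [Set.Finite.mem_toFinset] at hg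
      have h1 := Msr_lt hf hg
      have h2 := Msr_le hg.1
      have h3 := hg.2.1
      rw [h3] at h2
      omega
    rw [show qmonoP f = Qpart f from by rw [hc, hT, Finset.sum_empty, add_zero]]
    exact Submodule.subset_span ⟨⟨f, hf⟩, rfl⟩
  | succ dd ih =>
    intro f hf hd
    obtain ⟨c, hc⟩ := expand f hf
    have heq : qmonoP f = Qpart f - ∑ g ∈ (SD_finite f).toFinset, c g • qmonoP g := by
      rw [hc]; ring
    rw [heq]
    apply Submodule.sub_mem
    · exact Submodule.subset_span ⟨⟨f, hf⟩, rfl⟩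
    · apply Submodule.sum_mem
      intro g hg
      rw [Set.Finite.mem_toFinset] at hg
      apply Submodule.smul_mem
      apply ih g hg.1
      have h1 := Msr_lt hf hg
      have h3 := hg.2.1
      rw [h3]
      omega

end HLaux

theorem HL_triangular_and_basis :
    (∀ f : ℕ → ℕ, IsPart f →
      ∃ c : (ℕ → ℕ) → K, Qpart f = qmonoP f +
        ∑ᶠ g : ℕ → ℕ,
          if IsPart g ∧ (∑ᶠ i, g i) = (∑ᶠ i, f i) ∧
              (∀ k, ∑ i ∈ Finset.range k, f i ≤ ∑ i ∈ Finset.range k, g i) ∧ g ≠ f then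
            c g • qmonoP g
          else 0) ∧
    LinearIndependent K (fun p : {f : ℕ → ℕ // IsPart f} => Qpart p.1) ∧
    Submodule.span K (Set.range (fun p : {f : ℕ → ℕ // IsPart f} => Qpart p.1)) = ⊤ := by
  classical
  refine ⟨?_, ?_, ?_⟩
  · -- triangularity
    intro f hf
    obtain ⟨c, hc⟩ := HLaux.expand f hf
    refine ⟨fun g => if g ∈ (HLaux.SD_finite f).toFinset then c g else 0, ?_⟩
    rw [hc]
    congr 1
    rw [eq_comm]
    have hsub : Function.support (fun g : ℕ → ℕ =>
        if IsPart g ∧ (∑ᶠ i, g i) = (∑ᶠ i, f i) ∧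
            (∀ k, ∑ i ∈ Finset.range k, f i ≤ ∑ i ∈ Finset.range k, g i) ∧ g ≠ f then
          (if g ∈ (HLaux.SD_finite f).toFinset then c g else 0) • qmonoP g
        else 0) ⊆ ↑(HLaux.SD_finite f).toFinset := by
      intro g hg
      simp only [Function.mem_support] at hg
      by_cases hpred : IsPart g ∧ (∑ᶠ i, g i) = (∑ᶠ i, f i) ∧
          (∀ k, ∑ i ∈ Finset.range k, f i ≤ ∑ i ∈ Finset.range k, g i) ∧ g ≠ f
      · simp only [Finset.coe_sort_coe, Finset.mem_coe, Set.Finite.mem_toFinset]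
        exact hpred
      · exact absurd (if_neg hpred) hg
    rw [finsum_eq_sum_of_support_subset _ hsub]
    apply Finset.sum_congr rfl
    intro g hg
    have hpred : IsPart g ∧ (∑ᶠ i, g i) = (∑ᶠ i, f i) ∧
        (∀ k, ∑ i ∈ Finset.range k, f i ≤ ∑ i ∈ Finset.range k, g i) ∧ g ≠ f :=
      (HLaux.SD_finite f).mem_toFinset.mp hg
    rw [if_pos hpred, if_pos hg]
  · -- linear independence
    rw [linearIndependent_iff']
    intro s coef hsum i hi
    have H := fun (j : {f : ℕ → ℕ // IsPart f}) => HLaux.expand j.1 j.2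
    choose c hc using H
    suffices key : ∀ m, ∀ i ∈ s, HLaux.Msr i.1 ≤ m → coef i = 0 by
      exact key (HLaux.Msr i.1) i hi le_rfl
    intro m
    induction m using Nat.strong_induction_on with
    | _ m ih =>
    intro i hi hMi
    have hA : ∀ j : {f : ℕ → ℕ // IsPart f},
        MvPolynomial.coeff (HLaux.Ef i.1) (Qpart j.1)
          = (if j = i then (1 : K) else 0)
            + (if i.1 ∈ (HLaux.SD_finite j.1).toFinset then c j i.1 else 0) := by
      intro j
      rw [hc j, MvPolynomial.coeff_add, MvPolynomial.coeff_sum]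
      congr 1
      · rw [HLaux.coeff_qmonoP j.2 i.2]
        by_cases hji : j = i
        · rw [if_pos hji, if_pos (by rw [hji])]
        · rw [if_neg hji, if_neg (fun hcc => hji (Subtype.ext hcc))]
      · have : ∀ g ∈ (HLaux.SD_finite j.1).toFinset,
            MvPolynomial.coeff (HLaux.Ef i.1) (c j g • qmonoP g)
              = if g = i.1 then c j g else 0 := by
          intro g hg
          have hgp : IsPart g := ((HLaux.SD_finite j.1).mem_toFinset.mp hg).1
          rw [MvPolynomial.coeff_smul, HLaux.coeff_qmonoP hgp i.2, smul_eq_mul]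
          by_cases hgi : g = i.1 <;> simp [hgi]
        rw [Finset.sum_congr rfl this, Finset.sum_ite_eq' _ i.1 (c j)]
    have h0 : ∑ j ∈ s, coef j *
        ((if j = i then (1 : K) else 0)
          + (if i.1 ∈ (HLaux.SD_finite j.1).toFinset then c j i.1 else 0)) = 0 := by
      have := congrArg (MvPolynomial.coeff (HLaux.Ef i.1)) hsum
      rw [MvPolynomial.coeff_sum] at this
      simp only [MvPolynomial.coeff_smul, smul_eq_mul, MvPolynomial.coeff_zero] at this
      calc ∑ j ∈ s, coef j *
          ((if j = i then (1 : K) else 0)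
            + (if i.1 ∈ (HLaux.SD_finite j.1).toFinset then c j i.1 else 0))
          = ∑ j ∈ s, coef j * MvPolynomial.coeff (HLaux.Ef i.1) (Qpart j.1) :=
            Finset.sum_congr rfl (fun j _ => by rw [hA j])
        _ = 0 := this
    rw [← Finset.add_sum_erase s _ hi] at h0
    have hii : i.1 ∉ (HLaux.SD_finite i.1).toFinset := by
      rw [Set.Finite.mem_toFinset]
      exact fun hcc => hcc.2.2.2 rfl
    rw [if_pos rfl, if_neg hii, add_zero, mul_one] at h0
    have hz : ∀ j ∈ s.erase i, coef j *
        ((if j = i then (1 : K) else 0)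
          + (if i.1 ∈ (HLaux.SD_finite j.1).toFinset then c j i.1 else 0)) = 0 := by
      intro j hj
      have hji : j ≠ i := (Finset.mem_erase.mp hj).1
      rw [if_neg hji, zero_add]
      by_cases hmem : i.1 ∈ (HLaux.SD_finite j.1).toFinset
      · have hsd : i.1 ∈ HLaux.SD j.1 := (HLaux.SD_finite j.1).mem_toFinset.mp hmem
        have hlt := HLaux.Msr_lt j.2 hsd
        have : coef j = 0 :=
          ih (HLaux.Msr j.1) (by omega) j (Finset.mem_erase.mp hj).2 le_rfl
        rw [this, zero_mul]
      · rw [if_neg hmem, mul_zero]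
    rw [Finset.sum_eq_zero hz, add_zero] at h0
    exact h0
  · -- span
    rw [eq_top_iff]
    intro x _
    have hmono : ∀ d : ℕ →₀ ℕ, (MvPolynomial.monomial d (1 : K)) ∈
        Submodule.span K (Set.range (fun p : {f : ℕ → ℕ // IsPart f} => Qpart p.1)) := by
      intro d
      have h1 : qmonoP (HLaux.partFromD d) = MvPolynomial.monomial d 1 := by
        rw [HLaux.qmonoP_eq_monomial (HLaux.partFromD_isPart d), HLaux.Ef_partFromD d]
      rw [← h1]
      apply HLaux.qmonoP_mem_span
        (((∑ᶠ i, HLaux.partFromD d i) + 1) * (∑ᶠ i, HLaux.partFromD d i))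
        _ (HLaux.partFromD_isPart d)
      omega
    rw [MvPolynomial.as_sum x]
    apply Submodule.sum_mem
    intro d hd
    rw [show (MvPolynomial.monomial d) (MvPolynomial.coeff d x)
        = (MvPolynomial.coeff d x) • (MvPolynomial.monomial d (1 : K)) from by
      rw [MvPolynomial.smul_monomial, smul_eq_mul, mul_one]]
    exact Submodule.smul_mem _ _ (hmono d)

end
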